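/- Let p be an odd prime and x ∈ ZMod p with x ≠ 0. Then ∑_{n=1}^{p-1} T_n(x) · ((-2)⁻¹)^n = (x-1)/x in ZMod p, where T_n(x) denotes the n-th Touchard polynomial evaluated at x (reduced mod p). -/

import Mathlib

open Polynomial

/-- The Touchard polynomials in `ℤ[X]`, determined by `touchard 0 = 1` and
`touchard (n+1) = X * ∑_{k=0}^{n} C(n,k) * touchard k`. -/
noncomputable def touchard : ℕ → ℤ[X]
  | 0 => 1
  | n + 1 => X * ∑ k ∈ (Finset.range (n + 1)).attach, (n.choose k : ℤ[X]) * touchard k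
decreasing_by exact Finset.mem_range.mp k.2

open Finset
theorem touchard_succ (n : ℕ) :
    touchard (n + 1) = X * ∑ k ∈ Finset.range (n + 1), (n.choose k : ℤ[X]) * touchard k := by
  rw [touchard]
  congr 1
  exact Finset.sum_attach (Finset.range (n+1)) (fun k => (n.choose k : ℤ[X]) * touchard k)

section
variable {p : ℕ} [hp : Fact p.Prime]

lemma fact_ne {k : ℕ} (hk : k < p) : ((k.factorial : ℕ) : ZMod p) ≠ 0 := by
  rw [Ne, ZMod.natCast_eq_zero_iff]
  intro h
  exact absurd (hp.out.dvd_factorial.mp h) (not_le.mpr hk)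

lemma choose_neg_one {j : ℕ} (hj : j ≤ p - 1) : (((p - 1).choose j : ℕ) : ZMod p) = (-1) ^ j := by
  induction j with
  | zero => simp
  | succ j ih =>
    have hj' : j ≤ p - 1 := le_of_lt (lt_of_lt_of_le (Nat.lt_succ_self j) hj)
    have hple : 2 ≤ p := hp.out.two_le
    have hpas : (p - 1).choose j + (p - 1).choose (j + 1) = p.choose (j + 1) := by
      have h1 : p = (p - 1) + 1 := by omega
      conv_rhs => rw [h1, Nat.choose_succ_succ]
    have hdvd : p ∣ p.choose (j + 1) := by
      refine hp.out.dvd_choose_self (Nat.succ_ne_zero j) (by omega)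
    have hc : ((p.choose (j + 1) : ℕ) : ZMod p) = 0 := by
      rw [ZMod.natCast_eq_zero_iff]; exact hdvd
    have := congrArg (Nat.cast : ℕ → ZMod p) hpas
    push_cast at this
    rw [ih hj'] at this
    rw [hc] at this
    rw [pow_succ]
    linear_combination this

lemma fact_mul_fact {j : ℕ} (hj : j ≤ p - 1) :
    ((j.factorial : ℕ) : ZMod p) * (((p - 1 - j).factorial : ℕ) : ZMod p) = (-1) ^ (j + 1) := by
  have h := Nat.choose_mul_factorial_mul_factorial hj
  have hc := congrArg (Nat.cast : ℕ → ZMod p) h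
  push_cast at hc
  rw [choose_neg_one hj, ZMod.wilsons_lemma] at hc
  have hsq : ((-1 : ZMod p) ^ j) * ((-1 : ZMod p) ^ j) = 1 := by
    rw [← mul_pow]; norm_num
  rw [pow_succ]
  linear_combination ((-1 : ZMod p) ^ j) * hc - ((j.factorial : ℕ) : ZMod p) * (((p-1-j).factorial : ℕ) : ZMod p) * hsq

/-- truncated weights for the mod-p Dobinski-type formula -/
noncomputable def aa (p : ℕ) (x : ZMod p) (j : ℕ) : ZMod p :=
  x ^ j * ((j.factorial : ℕ) : ZMod p)⁻¹ *
    ∑ m ∈ Finset.range (p - j), (-x) ^ m * ((m.factorial : ℕ) : ZMod p)⁻¹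

lemma choose_cast {s j : ℕ} (hs : s ≤ p - 1) (hj : j ≤ s) :
    ((j.factorial : ℕ) : ZMod p)⁻¹ * (((s - j).factorial : ℕ) : ZMod p)⁻¹
      = ((s.choose j : ℕ) : ZMod p) * ((s.factorial : ℕ) : ZMod p)⁻¹ := by
  have hple : 2 ≤ p := hp.out.two_le
  have h := Nat.choose_mul_factorial_mul_factorial hj
  have hc := congrArg (Nat.cast : ℕ → ZMod p) h
  push_cast at hc
  have h1 : ((j.factorial : ℕ) : ZMod p) ≠ 0 := fact_ne (by omega)
  have h2 : (((s - j).factorial : ℕ) : ZMod p) ≠ 0 := fact_ne (by omega)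
  have h3 : ((s.factorial : ℕ) : ZMod p) ≠ 0 := fact_ne (by omega)
  field_simp
  linear_combination -hc

lemma triangle_sum {M : Type*} [AddCommMonoid M] (n : ℕ) (f : ℕ → ℕ → M) :
    ∑ j ∈ Finset.range n, ∑ m ∈ Finset.range (n - j), f j m
      = ∑ s ∈ Finset.range n, ∑ j ∈ Finset.range (s + 1), f j (s - j) := by
  rw [Finset.sum_sigma', Finset.sum_sigma']
  refine Finset.sum_nbij' (i := fun q => ⟨q.1 + q.2, q.1⟩) (j := fun q => ⟨q.2, q.1 - q.2⟩)
    ?_ ?_ ?_ ?_ ?_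
  · rintro ⟨j, m⟩ hq
    simp only [Finset.mem_sigma, Finset.mem_range] at hq ⊢
    omega
  · rintro ⟨s, j⟩ hq
    simp only [Finset.mem_sigma, Finset.mem_range] at hq ⊢
    omega
  · rintro ⟨j, m⟩ hq
    simp
  · rintro ⟨s, j⟩ hq
    simp only [Finset.mem_sigma, Finset.mem_range, Nat.lt_succ_iff] at hq
    have hjs : j + (s - j) = s := by omega
    simp [hjs]
  · rintro ⟨j, m⟩ hq
    simp

lemma sum_aa (x : ZMod p) : ∑ j ∈ Finset.range p, aa p x j = 1 := by
  have hple : 2 ≤ p := hp.out.two_le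
  have h0 : ∀ j, aa p x j
      = ∑ m ∈ Finset.range (p - j), x ^ j * ((j.factorial : ℕ) : ZMod p)⁻¹
          * ((-x) ^ m * ((m.factorial : ℕ) : ZMod p)⁻¹) := by
    intro j
    rw [aa, Finset.mul_sum]
  simp only [h0]
  rw [triangle_sum p (fun j m => x ^ j * ((j.factorial : ℕ) : ZMod p)⁻¹
          * ((-x) ^ m * ((m.factorial : ℕ) : ZMod p)⁻¹))]
  have hinner : ∀ s ∈ Finset.range p,
      (∑ j ∈ Finset.range (s + 1), x ^ j * ((j.factorial : ℕ) : ZMod p)⁻¹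
          * ((-x) ^ (s - j) * (((s - j).factorial : ℕ) : ZMod p)⁻¹))
        = if s = 0 then 1 else 0 := by
    intro s hs
    have hs' : s ≤ p - 1 := by have := Finset.mem_range.mp hs; omega
    have hterm : ∀ j ∈ Finset.range (s + 1),
        x ^ j * ((j.factorial : ℕ) : ZMod p)⁻¹
          * ((-x) ^ (s - j) * (((s - j).factorial : ℕ) : ZMod p)⁻¹)
        = (x ^ j * (-x) ^ (s - j) * ((s.choose j : ℕ) : ZMod p))
            * ((s.factorial : ℕ) : ZMod p)⁻¹ := by
      intro j hj
      have hj' : j ≤ s := by have := Finset.mem_range.mp hj; omega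
      have := choose_cast (p := p) hs' hj'
      calc x ^ j * ((j.factorial : ℕ) : ZMod p)⁻¹
          * ((-x) ^ (s - j) * (((s - j).factorial : ℕ) : ZMod p)⁻¹)
          = (x ^ j * (-x) ^ (s - j))
              * (((j.factorial : ℕ) : ZMod p)⁻¹ * (((s - j).factorial : ℕ) : ZMod p)⁻¹) := by
            ring
        _ = _ := by rw [this]; ring
    rw [Finset.sum_congr rfl hterm, ← Finset.sum_mul, ← add_pow, add_neg_cancel, zero_pow_eq]
    split
    · next h => subst h; simp
    · simp
  rw [Finset.sum_congr rfl hinner]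
  rw [Finset.sum_ite_eq' (Finset.range p) 0 (fun _ => (1 : ZMod p))]
  simp [Nat.pos_of_ne_zero, hp.out.pos]

lemma aa_last {x : ZMod p} (hx : x ≠ 0) : aa p x (p - 1) = -1 := by
  have hple : 2 ≤ p := hp.out.two_le
  have h1 : p - (p - 1) = 1 := by omega
  rw [aa, h1]
  rw [ZMod.pow_card_sub_one_eq_one hx, ZMod.wilsons_lemma]
  norm_num

lemma aa_rec (hp2 : p ≠ 2) {x : ZMod p} (hx : x ≠ 0) {j : ℕ} (hj : j + 1 ≤ p - 1) :
    ((j + 1 : ℕ) : ZMod p) * aa p x (j + 1) = x * aa p x j + x := by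
  have hple : 2 ≤ p := hp.out.two_le
  have hj1 : ((j + 1 : ℕ) : ZMod p) ≠ 0 := by
    rw [Ne, ZMod.natCast_eq_zero_iff]
    intro h
    have := Nat.le_of_dvd (Nat.succ_pos j) h
    omega
  have hfj : ((j.factorial : ℕ) : ZMod p) ≠ 0 := fact_ne (by omega)
  have hfj1 : (((j + 1).factorial : ℕ) : ZMod p) ≠ 0 := fact_ne (by omega)
  -- (j+1) * ((j+1)!)⁻¹ = (j!)⁻¹
  have hfact : ((j + 1 : ℕ) : ZMod p) * (((j + 1).factorial : ℕ) : ZMod p)⁻¹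
      = ((j.factorial : ℕ) : ZMod p)⁻¹ := by
    have h : ((j + 1).factorial : ℕ) = (j + 1) * j.factorial := rfl
    rw [h, Nat.cast_mul, mul_inv_rev, mul_comm ((j.factorial : ℕ) : ZMod p)⁻¹
      (((j + 1 : ℕ) : ZMod p))⁻¹, ← mul_assoc, mul_inv_cancel₀ hj1, one_mul]
  -- split the truncated exponential
  have hsplit : p - j = (p - (j + 1)) + 1 := by omega
  have hE : (∑ m ∈ Finset.range (p - j), (-x) ^ m * ((m.factorial : ℕ) : ZMod p)⁻¹)
      = (∑ m ∈ Finset.range (p - (j + 1)), (-x) ^ m * ((m.factorial : ℕ) : ZMod p)⁻¹)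
        + (-x) ^ (p - (j + 1)) * (((p - (j + 1)).factorial : ℕ) : ZMod p)⁻¹ := by
    rw [hsplit, Finset.sum_range_succ]
  -- the error term
  have hfmf := fact_mul_fact (p := p) (j := j) (by omega)
  have hinv : ((j.factorial : ℕ) : ZMod p)⁻¹ * (((p - 1 - j).factorial : ℕ) : ZMod p)⁻¹
      = (-1) ^ (j + 1) := by
    have hf2 : (((p - 1 - j).factorial : ℕ) : ZMod p) ≠ 0 := fact_ne (by omega)
    have hsq : ((-1 : ZMod p) ^ (j + 1)) * ((-1 : ZMod p) ^ (j + 1)) = 1 := by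
      rw [← mul_pow]; norm_num
    rw [← mul_inv_rev, mul_comm (((p - 1 - j).factorial : ℕ) : ZMod p)
      ((j.factorial : ℕ) : ZMod p), hfmf]
    exact inv_eq_of_mul_eq_one_right hsq
  have hxp : x ^ p = x := ZMod.pow_card x
  have hodd : Odd p := hp.out.odd_of_ne_two hp2
  have hm1 : (-1 : ZMod p) ^ p = -1 := hodd.neg_one_pow
  have hcomb : x ^ (j + 1) * (-x) ^ (p - (j + 1)) = (-1) ^ (p - (j + 1)) * x ^ p := by
    have h2 : (j + 1) + (p - (j + 1)) = p := by omega
    have h3 : x ^ p = x ^ (j + 1) * x ^ (p - (j + 1)) := by rw [← pow_add, h2]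
    rw [neg_pow, h3]
    ring
  have hpowm1 : ((-1 : ZMod p)) ^ (p - (j + 1)) * (-1) ^ (j + 1) = -1 := by
    rw [← pow_add]
    have : (p - (j + 1)) + (j + 1) = p := by omega
    rw [this, hm1]
  have hpj : p - 1 - j = p - (j + 1) := by omega
  rw [aa, aa, hE]
  rw [hpj] at hinv
  calc ((j + 1 : ℕ) : ZMod p) * (x ^ (j + 1) * (((j + 1).factorial : ℕ) : ZMod p)⁻¹ *
        ((∑ m ∈ Finset.range (p - (j + 1)), (-x) ^ m * ((m.factorial : ℕ) : ZMod p)⁻¹)))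
      = x ^ (j + 1) * ((j.factorial : ℕ) : ZMod p)⁻¹ *
        (∑ m ∈ Finset.range (p - (j + 1)), (-x) ^ m * ((m.factorial : ℕ) : ZMod p)⁻¹) := by
        rw [← hfact]; ring
    _ = x * (x ^ j * ((j.factorial : ℕ) : ZMod p)⁻¹ *
        ((∑ m ∈ Finset.range (p - (j + 1)), (-x) ^ m * ((m.factorial : ℕ) : ZMod p)⁻¹)
          + (-x) ^ (p - (j + 1)) * (((p - (j + 1)).factorial : ℕ) : ZMod p)⁻¹)) + x := by
        have herr : x * (x ^ j * ((j.factorial : ℕ) : ZMod p)⁻¹ *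
            ((-x) ^ (p - (j + 1)) * (((p - (j + 1)).factorial : ℕ) : ZMod p)⁻¹)) = -x := by
          calc x * (x ^ j * ((j.factorial : ℕ) : ZMod p)⁻¹ *
              ((-x) ^ (p - (j + 1)) * (((p - (j + 1)).factorial : ℕ) : ZMod p)⁻¹))
              = (x ^ (j + 1) * (-x) ^ (p - (j + 1))) *
                (((j.factorial : ℕ) : ZMod p)⁻¹ * (((p - (j + 1)).factorial : ℕ) : ZMod p)⁻¹) := by
                ring
            _ = ((-1) ^ (p - (j + 1)) * x ^ p) * (-1) ^ (j + 1) := by rw [hcomb, hinv]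
            _ = ((-1) ^ (p - (j + 1)) * (-1) ^ (j + 1)) * x ^ p := by ring
            _ = -x := by rw [hpowm1, hxp]; ring
        linear_combination -herr

lemma split_last {M : Type*} [AddCommMonoid M] (n : ℕ) (hn : n ≠ 0) (f : ℕ → M) :
    ∑ i ∈ Finset.range n, f i = (∑ i ∈ Finset.range (n - 1), f i) + f (n - 1) := by
  obtain ⟨m, rfl⟩ := Nat.exists_eq_succ_of_ne_zero hn
  rw [Finset.sum_range_succ, Nat.succ_sub_one]

lemma split_first {M : Type*} [AddCommMonoid M] (n : ℕ) (hn : n ≠ 0) (f : ℕ → M) :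
    ∑ i ∈ Finset.range n, f i = f 0 + ∑ i ∈ Finset.range (n - 1), f (i + 1) := by
  obtain ⟨m, rfl⟩ := Nat.exists_eq_succ_of_ne_zero hn
  rw [Finset.sum_range_succ', Nat.succ_sub_one, add_comm]

lemma sum_pow_eq_zero {p : ℕ} [hp : Fact p.Prime] {n : ℕ} (hn : n < p - 1) :
    ∑ i ∈ Finset.range p, ((i : ZMod p)) ^ n = 0 := by
  have hcard : Fintype.card (ZMod p) = p := ZMod.card p
  have h := FiniteField.sum_pow_lt_card_sub_one (ZMod p) n (by rwa [hcard])
  rw [← h]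
  refine Finset.sum_nbij' (i := fun i => ((i : ZMod p))) (j := fun a => a.val) ?_ ?_ ?_ ?_ ?_
  · intro a _; exact Finset.mem_univ _
  · intro a _
    exact Finset.mem_range.mpr (ZMod.val_lt a)
  · intro a ha
    exact ZMod.val_cast_of_lt (Finset.mem_range.mp ha)
  · intro a _
    exact ZMod.natCast_rightInverse a
  · intro a _; rfl

end

lemma touchard_eq {p : ℕ} [hp : Fact p.Prime] (hp2 : p ≠ 2) {x : ZMod p} (hx : x ≠ 0) :
    ∀ n, n ≤ p - 1 → (aeval x (touchard n) : ZMod p)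
      = ∑ j ∈ Finset.range p, aa p x j * ((j : ℕ) : ZMod p) ^ n := by
  intro n
  induction n using Nat.strong_induction_on with
  | _ n ih =>
  match n with
  | 0 =>
    intro _
    have h0 : touchard 0 = 1 := by rw [touchard]
    rw [h0]
    simp [sum_aa]
  | (m + 1) =>
    intro hsn
    have hple : 2 ≤ p := hp.out.two_le
    rw [touchard_succ, map_mul, aeval_X, map_sum]
    have hstep : ∀ k ∈ Finset.range (m + 1),
        (aeval x ((m.choose k : ℤ[X]) * touchard k))
          = ∑ j ∈ Finset.range p, aa p x j * (((m.choose k : ℕ) : ZMod p) * ((j : ℕ) : ZMod p) ^ k) := by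
      intro k hk
      have hk' := Finset.mem_range.mp hk
      rw [map_mul, map_natCast, ih k hk' (by omega), Finset.mul_sum]
      exact Finset.sum_congr rfl fun j _ => by ring
    rw [Finset.sum_congr rfl hstep, Finset.sum_comm]
    have hbin : ∀ j ∈ Finset.range p,
        (∑ k ∈ Finset.range (m + 1),
            aa p x j * (((m.choose k : ℕ) : ZMod p) * ((j : ℕ) : ZMod p) ^ k))
          = aa p x j * (((j + 1 : ℕ) : ZMod p)) ^ m := by
      intro j _
      rw [← Finset.mul_sum]
      congr 1
      have hap := add_pow ((j : ℕ) : ZMod p) 1 m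
      simp only [one_pow, mul_one] at hap
      push_cast
      rw [hap]
      exact Finset.sum_congr rfl fun k _ => by ring
    rw [Finset.sum_congr rfl hbin, Finset.mul_sum]
    rw [split_last p (by omega) (fun j => x * (aa p x j * (((j + 1 : ℕ) : ZMod p)) ^ m))]
    have hlast : ((p - 1 + 1 : ℕ) : ZMod p) = 0 := by
      rw [show p - 1 + 1 = p by omega, ZMod.natCast_self]
    rw [hlast, aa_last hx]
    have hterm : ∀ j ∈ Finset.range (p - 1),
        x * (aa p x j * (((j + 1 : ℕ) : ZMod p)) ^ m)
          = aa p x (j + 1) * (((j + 1 : ℕ) : ZMod p)) ^ (m + 1)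
            - x * (((j + 1 : ℕ) : ZMod p)) ^ m := by
      intro j hj
      have hj' : j + 1 ≤ p - 1 := by have := Finset.mem_range.mp hj; omega
      have hr := aa_rec hp2 hx hj'
      linear_combination (-(((j + 1 : ℕ) : ZMod p)) ^ m) * hr
    rw [Finset.sum_congr rfl hterm, Finset.sum_sub_distrib]
    rw [split_first p (by omega) (fun j => aa p x j * ((j : ℕ) : ZMod p) ^ (m + 1))]
    have h00 : aa p x 0 * (((0 : ℕ) : ZMod p)) ^ (m + 1) = 0 := by
      simp [zero_pow (Nat.succ_ne_zero m)]
    rw [h00]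
    have hB : ∑ j ∈ Finset.range (p - 1), (((j + 1 : ℕ) : ZMod p)) ^ m = -((0 : ZMod p) ^ m) := by
      have h := sum_pow_eq_zero (p := p) (n := m) (by omega)
      rw [split_first p (by omega) (fun j => ((j : ℕ) : ZMod p) ^ m)] at h
      simp only [Nat.cast_zero] at h
      linear_combination h
    rw [← Finset.mul_sum, hB]
    ring

theorem touchard_sum_m_two (p : ℕ) [hp : Fact p.Prime] (hp2 : p ≠ 2)
    (x : ZMod p) (hx : x ≠ 0) :
    ∑ n ∈ Finset.Icc 1 (p - 1), (aeval x (touchard n)) * ((-2 : ZMod p)⁻¹) ^ n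
      = (x - 1) / x := by
  have hple : 2 ≤ p := hp.out.two_le
  have hp3 : 3 ≤ p := by
    rcases Nat.lt_or_ge p 3 with h | h
    · interval_cases p <;> simp_all
    · exact h
  set t : ZMod p := (-2 : ZMod p)⁻¹ with ht
  have h2ne : (2 : ZMod p) ≠ 0 := by
    have : ((2 : ℕ) : ZMod p) ≠ 0 := by
      rw [Ne, ZMod.natCast_eq_zero_iff]
      intro h
      have := Nat.le_of_dvd (by norm_num) h
      omega
    simpa using this
  have hm2 : (-2 : ZMod p) ≠ 0 := neg_ne_zero.mpr h2ne
  have hcast2 : ((p - 2 : ℕ) : ZMod p) = -2 := by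
    rw [Nat.cast_sub hple, ZMod.natCast_self]
    norm_num
  have hcast1 : ((p - 1 : ℕ) : ZMod p) = -1 := by
    rw [Nat.cast_sub (by omega), ZMod.natCast_self]
    norm_num
  have h1 : ∀ n ∈ Finset.Icc 1 (p - 1), (aeval x (touchard n)) * t ^ n
      = ∑ j ∈ Finset.range p, aa p x j * (((j : ℕ) : ZMod p) * t) ^ n := by
    intro n hn
    obtain ⟨hn1, hn2⟩ := Finset.mem_Icc.mp hn
    rw [touchard_eq hp2 hx n hn2, Finset.sum_mul]
    exact Finset.sum_congr rfl fun j _ => by rw [mul_pow]; ring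
  rw [Finset.sum_congr rfl h1, Finset.sum_comm]
  have h2' : ∀ j ∈ Finset.range p,
      ∑ n ∈ Finset.Icc 1 (p - 1), aa p x j * (((j : ℕ) : ZMod p) * t) ^ n
        = aa p x j * ∑ n ∈ Finset.Icc 1 (p - 1), (((j : ℕ) : ZMod p) * t) ^ n := by
    intro j _
    rw [Finset.mul_sum]
  rw [Finset.sum_congr rfl h2']
  have hgeom : ∀ u : ZMod p, u ≠ 1 → ∑ n ∈ Finset.Icc 1 (p - 1), u ^ n = 0 := by
    intro u hu
    have hIcc : Finset.Icc 1 (p - 1) = Finset.Ico 1 p := by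
      rw [← Finset.Ico_add_one_right_eq_Icc, show p - 1 + 1 = p by omega]
    have hsplit : ∑ n ∈ Finset.range p, u ^ n = u ^ 0 + ∑ n ∈ Finset.Ico 1 p, u ^ n := by
      rw [Finset.range_eq_Ico]
      exact Finset.sum_eq_sum_Ico_succ_bot (by omega) _
    have hg : ∑ n ∈ Finset.range p, u ^ n = 1 := by
      rw [geom_sum_eq hu p, ZMod.pow_card, div_self (sub_ne_zero.mpr hu)]
    rw [hIcc]
    have := hsplit
    rw [hg, pow_zero] at this
    linear_combination -this
  have hmain : ∑ j ∈ Finset.range p,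
      aa p x j * ∑ n ∈ Finset.Icc 1 (p - 1), (((j : ℕ) : ZMod p) * t) ^ n
        = aa p x (p - 2) * (-1) := by
    rw [Finset.sum_eq_single (p - 2)]
    · congr 1
      have hu1 : ((p - 2 : ℕ) : ZMod p) * t = 1 := by
        rw [hcast2, ht, mul_inv_cancel₀ hm2]
      rw [hu1]
      simp only [one_pow, Finset.sum_const, Nat.card_Icc]
      rw [show p - 1 + 1 - 1 = p - 1 by omega, nsmul_eq_mul, mul_one, hcast1]
    · intro j hj hne
      have hjlt := Finset.mem_range.mp hj
      have hu : ((j : ℕ) : ZMod p) * t ≠ 1 := by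
        intro hu
        rw [ht, ← div_eq_mul_inv] at hu
        have hj2 : ((j : ℕ) : ZMod p) = -2 := (div_eq_one_iff_eq hm2).mp hu
        rw [← hcast2] at hj2
        have := congrArg ZMod.val hj2
        rw [ZMod.val_cast_of_lt hjlt, ZMod.val_cast_of_lt (by omega)] at this
        exact hne this
      rw [hgeom _ hu, mul_zero]
    · intro h
      exact absurd (Finset.mem_range.mpr (by omega)) h
  rw [hmain]
  have hr := aa_rec (p := p) hp2 hx (j := p - 2) (by omega)
  rw [show p - 2 + 1 = p - 1 by omega, hcast1, aa_last hx] at hr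
  have hxne : x ≠ 0 := hx
  field_simp
  linear_combination hr
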